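/- Let k : ℝ^d → ℝ be a measurable function with 0 ≤ k(w) ≤ M for all w ∈ ℝ^d, and let g be its Gaussian smoothing with parameter σ > 0. Then the Hessian of g is uniformly bounded in operator norm by M/σ²; equivalently, for every μ ∈ ℝ^d and every s ∈ ℝ^d, |sᵀ (∇²g(μ)) s| ≤ (M/σ²)·‖s‖². -/

import Mathlib

set_option maxHeartbeats 1000000
set_option synthInstance.maxHeartbeats 400000


open MeasureTheory Real

/-- The Gaussian smoothing of `k : ℝ^d → ℝ` with parameter `σ`:
`g(μ) = ∫ (2πσ²)^(−d/2) · exp(−‖w − μ‖²/(2σ²)) · k(w) dw = E_{w ∼ N(μ, σ²I)}[k(w)]`. -/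
noncomputable def gaussSmooth (d : ℕ) (σ : ℝ) (k : EuclideanSpace ℝ (Fin d) → ℝ) :
    EuclideanSpace ℝ (Fin d) → ℝ :=
  fun μ => ∫ w, (2 * π * σ ^ 2) ^ (-(d : ℝ) / 2) * Real.exp (-‖w - μ‖ ^ 2 / (2 * σ ^ 2)) * k w

namespace GSAux

variable {d : ℕ} {σ : ℝ}

local notation "E" => EuclideanSpace ℝ (Fin d)


/-! ### Real inequalities -/

lemma sq_half_le {u x : ℝ} (hu : 0 ≤ u) (hx : 0 ≤ x) (h : x - 1 ≤ u) :
    x ^ 2 / 2 - 1 ≤ u ^ 2 := by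
  rcases le_or_gt x 1 with h1 | h1
  · nlinarith [sq_nonneg u]
  · nlinarith [sq_nonneg (x - 2)]

lemma dom_ineq (hσ : 0 < σ) {u x : ℝ} (hu : 0 ≤ u) (hx : 0 ≤ x) (h : x - 1 ≤ u) :
    rexp (-u ^ 2 / (2 * σ ^ 2)) * (1 + u) ^ 2 ≤
      rexp (4 * σ ^ 2 + 1 / (4 * σ ^ 2)) * rexp (-x ^ 2 / (8 * σ ^ 2)) := by
  have hσ2 : (0:ℝ) < σ ^ 2 := by positivity
  have h1 : (1 + u) ^ 2 ≤ rexp (2 * u) := by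
    have h2 := Real.add_one_le_exp u
    have h3 : (1 + u) ^ 2 ≤ (rexp u) ^ 2 := by nlinarith [Real.exp_pos u]
    calc (1 + u) ^ 2 ≤ (rexp u) ^ 2 := h3
      _ = rexp (2 * u) := by rw [sq, ← Real.exp_add]; ring_nf
  have key : 2 * u - u ^ 2 / (2 * σ ^ 2) ≤ 4 * σ ^ 2 + 1 / (4 * σ ^ 2) - x ^ 2 / (8 * σ ^ 2) := by
    have h2 := sq_half_le hu hx h
    rw [← sub_nonneg]
    have expand : 4 * σ ^ 2 + 1 / (4 * σ ^ 2) - x ^ 2 / (8 * σ ^ 2) - (2 * u - u ^ 2 / (2 * σ ^ 2))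
        = (32 * σ ^ 4 + 2 - x ^ 2 - (16 * σ ^ 2 * u - 4 * u ^ 2)) / (8 * σ ^ 2) := by
      field_simp; ring
    rw [expand]
    apply div_nonneg _ (by positivity)
    nlinarith [sq_nonneg (u - 4 * σ ^ 2)]
  calc rexp (-u ^ 2 / (2 * σ ^ 2)) * (1 + u) ^ 2
      ≤ rexp (-u ^ 2 / (2 * σ ^ 2)) * rexp (2 * u) :=
        mul_le_mul_of_nonneg_left h1 (Real.exp_pos _).le
    _ = rexp (2 * u - u ^ 2 / (2 * σ ^ 2)) := by rw [← Real.exp_add]; ring_nf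
    _ ≤ rexp (4 * σ ^ 2 + 1 / (4 * σ ^ 2) - x ^ 2 / (8 * σ ^ 2)) := Real.exp_le_exp.mpr key
    _ = _ := by rw [← Real.exp_add]; ring_nf

/-! ### Gaussian integrals -/

lemma integrable_gauss {b : ℝ} (hb : 0 < b) :
    Integrable (fun v : E => rexp (-b * ‖v‖ ^ 2)) := by
  have h := GaussianFourier.integrable_cexp_neg_mul_sq_norm_add
    (V := EuclideanSpace ℝ (Fin d)) (b := (b : ℂ)) (by simpa using hb) 0 0
  have h2 := h.norm
  refine h2.congr ?_
  filter_upwards with v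
  rw [Complex.norm_exp]
  congr 1
  rw [← Complex.ofReal_pow]
  rw [show (-(b:ℂ) * (↑(‖v‖^2)) + 0 * ((inner ℝ 0 v : ℝ) : ℂ)) = ((-b * ‖v‖^2 : ℝ) : ℂ) by
    push_cast; ring]
  exact Complex.ofReal_re _

lemma integrable_gauss_shift {b : ℝ} (hb : 0 < b) (μ₀ : E) :
    Integrable (fun w : E => rexp (-b * ‖w - μ₀‖ ^ 2)) :=
  (integrable_gauss hb).comp_sub_right μ₀

lemma integral_gauss {b : ℝ} (hb : 0 < b) :
    ∫ v : E, rexp (-b * ‖v‖ ^ 2) = (π / b) ^ ((d : ℝ) / 2) := by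
  rw [show ∫ v : E, rexp (-b * ‖v‖ ^ 2) = ∫ v : E, rexp (-b * ‖v‖ ^ 2) from rfl]
  have := GaussianFourier.integral_rexp_neg_mul_sq_norm (V := EuclideanSpace ℝ (Fin d)) hb
  simpa [finrank_euclideanSpace_fin] using this

/-! ### The integrand and its derivatives -/

noncomputable def Qf (d : ℕ) (σ : ℝ) (w μ : EuclideanSpace ℝ (Fin d)) : ℝ :=
  rexp (-‖w - μ‖ ^ 2 / (2 * σ ^ 2))

lemma Qf_pos (w μ : E) : 0 < Qf d σ w μ := Real.exp_pos _

lemma Qf_eq (w μ : E) : Qf d σ w μ = rexp (-(1 / (2 * σ ^ 2)) * ‖w - μ‖ ^ 2) := by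
  unfold Qf; congr 1; ring

lemma continuous_Qf (μ : E) : Continuous fun w : E => Qf d σ w μ := by
  unfold Qf; fun_prop

noncomputable def innerR (d : ℕ) :
    EuclideanSpace ℝ (Fin d) →L[ℝ] (EuclideanSpace ℝ (Fin d) →L[ℝ] ℝ) := innerSL ℝ

@[simp] lemma innerR_apply (w v : EuclideanSpace ℝ (Fin d)) :
    innerR d w v = inner ℝ w v := rfl

lemma norm_innerR_le : ‖innerR d‖ ≤ 1 := by
  refine ContinuousLinearMap.opNorm_le_bound _ zero_le_one fun w => ?_
  have : innerR d w = innerSL ℝ w := rfl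
  rw [this, innerSL_apply_norm, one_mul]

noncomputable def Cn (d : ℕ) (σ : ℝ) : ℝ := (2 * π * σ ^ 2) ^ (-(d : ℝ) / 2)

lemma Cn_pos (hσ : 0 < σ) : 0 < Cn d σ := by
  unfold Cn
  exact Real.rpow_pos_of_pos (by positivity) _

noncomputable def D1 (d : ℕ) (σ : ℝ) (k : EuclideanSpace ℝ (Fin d) → ℝ)
    (μ w : EuclideanSpace ℝ (Fin d)) : EuclideanSpace ℝ (Fin d) →L[ℝ] ℝ :=
  ((Cn d σ * k w * Qf d σ w μ) / σ ^ 2) • innerSL ℝ (w - μ)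

noncomputable def D2 (d : ℕ) (σ : ℝ) (k : EuclideanSpace ℝ (Fin d) → ℝ)
    (μ w : EuclideanSpace ℝ (Fin d)) :
    EuclideanSpace ℝ (Fin d) →L[ℝ] (EuclideanSpace ℝ (Fin d) →L[ℝ] ℝ) :=
  ((Cn d σ * k w * Qf d σ w μ) / σ ^ 2) •
    ((1 / σ ^ 2) • (innerSL ℝ (w - μ)).smulRight (innerSL ℝ (w - μ))
      - innerR d)

lemma D2_apply (k : E → ℝ) (μ w s v : E) :
    D2 d σ k μ w s v = Cn d σ * k w * Qf d σ w μ / σ ^ 2 *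
      ((inner ℝ (w - μ) s : ℝ) * (inner ℝ (w - μ) v : ℝ) / σ ^ 2 - (inner ℝ s v : ℝ)) := by
  simp only [D2, ContinuousLinearMap.smul_apply, ContinuousLinearMap.sub_apply,
    ContinuousLinearMap.smulRight_apply, innerR_apply, innerSL_apply_apply, smul_eq_mul]
  ring

lemma hasFDerivAt_Qf (hσ : 0 < σ) (w μ : E) :
    HasFDerivAt (fun μ : E => Qf d σ w μ)
      ((Qf d σ w μ / σ ^ 2) • innerSL ℝ (w - μ)) μ := by
  have h0 : HasFDerivAt (fun μ : E => w - μ)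
      (-(ContinuousLinearMap.id ℝ (EuclideanSpace ℝ (Fin d)))) μ :=
    (hasFDerivAt_id μ).const_sub w
  have h1 := h0.norm_sq
  have h2 := h1.const_mul (-(1 / (2 * σ ^ 2)))
  have h3 := h2.exp
  have hfun : (fun μ : E => Qf d σ w μ)
      = fun μ : E => rexp (-(1 / (2 * σ ^ 2)) * ‖w - μ‖ ^ 2) := by
    funext ν; exact Qf_eq w ν
  rw [hfun]
  refine h3.congr_fderiv ?_
  ext v
  have hσ2 : σ ^ 2 ≠ 0 := by positivity
  simp [Qf_eq, two_smul]
  field_simp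
  ring

lemma hasFDerivAt_F (hσ : 0 < σ) (k : E → ℝ) (w μ : E) :
    HasFDerivAt (fun μ : E => Cn d σ * Qf d σ w μ * k w) (D1 d σ k μ w) μ := by
  have h := ((hasFDerivAt_Qf hσ w μ).const_mul (Cn d σ)).mul_const (k w)
  refine h.congr_fderiv ?_
  ext v
  simp [D1]
  ring

lemma hasFDerivAt_D1 (hσ : 0 < σ) (k : E → ℝ) (w μ : E) :
    HasFDerivAt (fun μ : E => D1 d σ k μ w) (D2 d σ k μ w) μ := by
  have hc : HasFDerivAt (fun μ : E => (Cn d σ * k w / σ ^ 2) * Qf d σ w μ)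
      ((Cn d σ * k w / σ ^ 2) • ((Qf d σ w μ / σ ^ 2) • innerSL ℝ (w - μ))) μ :=
    (hasFDerivAt_Qf hσ w μ).const_mul _
  have hf : HasFDerivAt (fun μ : E => innerSL ℝ (w - μ)) (-innerR d) μ := by
    have := ((innerR d).hasFDerivAt (x := w - μ)).comp μ
      ((hasFDerivAt_id μ).const_sub w)
    refine this.congr_fderiv ?_
    ext v u
    simp [innerR, inner_sub_left]
  have h := hc.smul hf
  have hfun : (fun μ : E => D1 d σ k μ w)
      = fun μ : E => ((Cn d σ * k w / σ ^ 2) * Qf d σ w μ) • innerSL ℝ (w - μ) := by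
    funext ν; unfold D1; congr 1; ring
  rw [hfun]
  refine h.congr_fderiv ?_
  ext v u
  simp only [D2, ContinuousLinearMap.smul_apply, ContinuousLinearMap.sub_apply,
    ContinuousLinearMap.add_apply, ContinuousLinearMap.smulRight_apply,
    ContinuousLinearMap.neg_apply, innerR_apply, innerSL_apply_apply, smul_eq_mul]
  ring


lemma i0 (hσ : 0 < σ) (μ : E) : Integrable (fun w : E => Cn d σ * Qf d σ w μ) := by
  have hb : (0:ℝ) < 1 / (2 * σ ^ 2) := by positivity
  have h := (integrable_gauss_shift (d := d) hb μ).const_mul (Cn d σ)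
  refine h.congr ?_
  filter_upwards with w
  rw [Qf_eq]

lemma normQ (hσ : 0 < σ) (μ : E) : ∫ w : E, Cn d σ * Qf d σ w μ = 1 := by
  have hb : (0:ℝ) < 1 / (2 * σ ^ 2) := by positivity
  have h1 : ∫ w : E, Cn d σ * Qf d σ w μ
      = Cn d σ * ∫ w : E, rexp (-(1 / (2 * σ ^ 2)) * ‖w - μ‖ ^ 2) := by
    rw [← integral_const_mul]
    congr 1; funext w; rw [Qf_eq]
  have h2 : ∫ w : E, rexp (-(1 / (2 * σ ^ 2)) * ‖w - μ‖ ^ 2)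
      = ∫ v : E, rexp (-(1 / (2 * σ ^ 2)) * ‖v‖ ^ 2) :=
    integral_sub_right_eq_self (fun v : E => rexp (-(1 / (2 * σ ^ 2)) * ‖v‖ ^ 2)) μ
  rw [h1, h2, integral_gauss hb]
  have hA : (0:ℝ) < 2 * π * σ ^ 2 := by positivity
  have h3 : π / (1 / (2 * σ ^ 2)) = 2 * π * σ ^ 2 := by field_simp
  rw [h3]
  unfold Cn
  rw [← Real.rpow_add hA, show (-(d:ℝ) / 2 + (d:ℝ) / 2) = 0 by ring, Real.rpow_zero]

/-- the uniform integrable bound for `D1` and `D2` on the unit ball around `μ₀` -/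
noncomputable def Bnd (d : ℕ) (σ M₀ : ℝ) (μ₀ w : EuclideanSpace ℝ (Fin d)) : ℝ :=
  Cn d σ * M₀ * (1 / σ ^ 2 + 1 / σ ^ 4) * rexp (4 * σ ^ 2 + 1 / (4 * σ ^ 2)) *
    rexp (-‖w - μ₀‖ ^ 2 / (8 * σ ^ 2))

lemma integrable_Bnd (hσ : 0 < σ) (M₀ : ℝ) (μ₀ : E) :
    Integrable (fun w : E => Bnd d σ M₀ μ₀ w) := by
  have hb : (0:ℝ) < 1 / (8 * σ ^ 2) := by positivity
  have h := (integrable_gauss_shift (d := d) hb μ₀).const_mul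
    (Cn d σ * M₀ * (1 / σ ^ 2 + 1 / σ ^ 4) * rexp (4 * σ ^ 2 + 1 / (4 * σ ^ 2)))
  refine h.congr ?_
  filter_upwards with w
  unfold Bnd
  congr 1
  congr 1
  ring

lemma ball_ineq {μ₀ μ w : E} (hμ : μ ∈ Metric.ball μ₀ (1:ℝ)) :
    ‖w - μ₀‖ - 1 ≤ ‖w - μ‖ := by
  have h1 : ‖w - μ₀‖ ≤ ‖w - μ‖ + ‖μ - μ₀‖ := norm_sub_le_norm_sub_add_norm_sub w μ μ₀
  have h2 : ‖μ - μ₀‖ < 1 := by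
    rw [Metric.mem_ball, dist_eq_norm] at hμ; exact hμ
  linarith

lemma Q_poly_bound (hσ : 0 < σ) {μ₀ μ w : E} (hμ : μ ∈ Metric.ball μ₀ (1:ℝ)) :
    Qf d σ w μ * (1 + ‖w - μ‖) ^ 2
      ≤ rexp (4 * σ ^ 2 + 1 / (4 * σ ^ 2)) * rexp (-‖w - μ₀‖ ^ 2 / (8 * σ ^ 2)) :=
  dom_ineq hσ (norm_nonneg _) (norm_nonneg _) (by linarith [ball_ineq (w := w) hμ])

lemma scalar_abs_le (hσ : 0 < σ) (k : E → ℝ) {M₀ : ℝ} (hbd : ∀ w, |k w| ≤ M₀)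
    (μ w : E) : |Cn d σ * k w * Qf d σ w μ / σ ^ 2| ≤ Cn d σ * M₀ * Qf d σ w μ / σ ^ 2 := by
  have hCn := Cn_pos (d := d) hσ
  have hQ := Qf_pos (d := d) (σ := σ) w μ
  rw [abs_div, abs_of_pos (by positivity : (0:ℝ) < σ ^ 2), abs_mul, abs_mul,
    abs_of_pos hCn, abs_of_pos hQ]
  gcongr
  exact hbd w

lemma norm_D1_le (hσ : 0 < σ) (k : E → ℝ) {M₀ : ℝ} (hbd : ∀ w, |k w| ≤ M₀) (μ₀ : E)
    (w : E) : ∀ μ ∈ Metric.ball μ₀ (1:ℝ), ‖D1 d σ k μ w‖ ≤ Bnd d σ M₀ μ₀ w := by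
  intro μ hμ
  have hM₀ : 0 ≤ M₀ := (abs_nonneg _).trans (hbd w)
  have hCn := Cn_pos (d := d) hσ
  have hQ := Qf_pos (d := d) (σ := σ) w μ
  have hu0 : (0:ℝ) ≤ ‖w - μ‖ := norm_nonneg _
  have h1 : ‖D1 d σ k μ w‖ ≤ |Cn d σ * k w * Qf d σ w μ / σ ^ 2| * ‖w - μ‖ := by
    unfold D1
    refine (ContinuousLinearMap.opNorm_smul_le (Cn d σ * k w * Qf d σ w μ / σ ^ 2)
      (innerSL ℝ (w - μ))).trans ?_
    rw [innerSL_apply_norm, Real.norm_eq_abs]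
  have h3 : ‖w - μ‖ ≤ (1 + ‖w - μ‖) ^ 2 := by nlinarith
  have h5 := Q_poly_bound (d := d) (w := w) hσ hμ
  calc ‖D1 d σ k μ w‖ ≤ |Cn d σ * k w * Qf d σ w μ / σ ^ 2| * ‖w - μ‖ := h1
    _ ≤ (Cn d σ * M₀ * Qf d σ w μ / σ ^ 2) * (1 + ‖w - μ‖) ^ 2 := by
        have h2 := scalar_abs_le hσ k hbd μ w
        have := mul_le_mul h2 h3 hu0 (by positivity)
        linarith
    _ = (Cn d σ * M₀ / σ ^ 2) * (Qf d σ w μ * (1 + ‖w - μ‖) ^ 2) := by ring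
    _ ≤ (Cn d σ * M₀ / σ ^ 2) *
        (rexp (4 * σ ^ 2 + 1 / (4 * σ ^ 2)) * rexp (-‖w - μ₀‖ ^ 2 / (8 * σ ^ 2))) := by
        gcongr
    _ ≤ Bnd d σ M₀ μ₀ w := by
        unfold Bnd
        have h6 : Cn d σ * M₀ / σ ^ 2 ≤ Cn d σ * M₀ * (1 / σ ^ 2 + 1 / σ ^ 4) := by
          rw [div_eq_mul_inv, ← one_div]
          have : (0:ℝ) ≤ Cn d σ * M₀ := by positivity
          nlinarith [show (0:ℝ) < 1 / σ ^ 4 by positivity]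
        have hX : (0:ℝ) ≤ rexp (4 * σ ^ 2 + 1 / (4 * σ ^ 2)) *
            rexp (-‖w - μ₀‖ ^ 2 / (8 * σ ^ 2)) := by positivity
        calc (Cn d σ * M₀ / σ ^ 2) *
            (rexp (4 * σ ^ 2 + 1 / (4 * σ ^ 2)) * rexp (-‖w - μ₀‖ ^ 2 / (8 * σ ^ 2)))
            ≤ (Cn d σ * M₀ * (1 / σ ^ 2 + 1 / σ ^ 4)) *
              (rexp (4 * σ ^ 2 + 1 / (4 * σ ^ 2)) * rexp (-‖w - μ₀‖ ^ 2 / (8 * σ ^ 2))) :=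
            mul_le_mul_of_nonneg_right h6 hX
          _ = _ := by ring

lemma norm_D2_le (hσ : 0 < σ) (k : E → ℝ) {M₀ : ℝ} (hbd : ∀ w, |k w| ≤ M₀) (μ₀ : E)
    (w : E) : ∀ μ ∈ Metric.ball μ₀ (1:ℝ), ‖D2 d σ k μ w‖ ≤ Bnd d σ M₀ μ₀ w := by
  intro μ hμ
  have hM₀ : 0 ≤ M₀ := (abs_nonneg _).trans (hbd w)
  have hCn := Cn_pos (d := d) hσ
  have hQ := Qf_pos (d := d) (σ := σ) w μ
  have hu0 : (0:ℝ) ≤ ‖w - μ‖ := norm_nonneg _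
  have h1 : ‖D2 d σ k μ w‖ ≤ |Cn d σ * k w * Qf d σ w μ / σ ^ 2| *
      (‖w - μ‖ ^ 2 / σ ^ 2 + 1) := by
    unfold D2
    refine (ContinuousLinearMap.opNorm_smul_le (Cn d σ * k w * Qf d σ w μ / σ ^ 2)
      ((1 / σ ^ 2 : ℝ) • (innerSL ℝ (w - μ)).smulRight (innerSL ℝ (w - μ)) - innerR d)).trans ?_
    rw [Real.norm_eq_abs]
    gcongr
    refine (norm_sub_le _ _).trans ?_
    have hs : ‖(1 / σ ^ 2 : ℝ) • (innerSL ℝ (w - μ)).smulRight (innerSL ℝ (w - μ))‖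
        ≤ ‖w - μ‖ ^ 2 / σ ^ 2 := by
      refine (ContinuousLinearMap.opNorm_smul_le ((1 : ℝ) / σ ^ 2)
        ((innerSL ℝ (w - μ)).smulRight (innerSL ℝ (w - μ)))).trans ?_
      rw [ContinuousLinearMap.norm_smulRight_apply, innerSL_apply_norm,
        Real.norm_eq_abs, abs_of_pos (by positivity : (0:ℝ) < 1 / σ ^ 2)]
      apply le_of_eq
      rw [sq]
      ring
    have hi := norm_innerR_le (d := d)
    linarith
  have h3 : ‖w - μ‖ ^ 2 / σ ^ 2 + 1 ≤ (1 / σ ^ 2 + 1 / σ ^ 2 * σ ^ 2) * (1 + ‖w - μ‖) ^ 2 := by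
    have e1 : ‖w - μ‖ ^ 2 ≤ (1 + ‖w - μ‖) ^ 2 := by nlinarith
    have e2 : (1:ℝ) ≤ (1 + ‖w - μ‖) ^ 2 := by nlinarith
    have hσ2 : (0:ℝ) < σ ^ 2 := by positivity
    have t1 : ‖w - μ‖ ^ 2 / σ ^ 2 ≤ (1 + ‖w - μ‖) ^ 2 / σ ^ 2 := by gcongr
    have t2 : (1 / σ ^ 2 * σ ^ 2 : ℝ) = 1 := by field_simp
    calc ‖w - μ‖ ^ 2 / σ ^ 2 + 1 ≤ (1 + ‖w - μ‖) ^ 2 / σ ^ 2 + 1 * (1 + ‖w - μ‖) ^ 2 := by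
          linarith [mul_le_mul_of_nonneg_left e2 (zero_le_one (α := ℝ))]
      _ = (1 / σ ^ 2 + 1 / σ ^ 2 * σ ^ 2 * 1) * (1 + ‖w - μ‖) ^ 2 := by rw [t2]; ring
      _ = _ := by ring
  have h5 := Q_poly_bound (d := d) (w := w) hσ hμ
  have hfac : (1 / σ ^ 2 + 1 / σ ^ 2 * σ ^ 2) * (1 / σ ^ 2) = 1 / σ ^ 2 + 1 / σ ^ 4 := by
    field_simp
    ring
  calc ‖D2 d σ k μ w‖ ≤ |Cn d σ * k w * Qf d σ w μ / σ ^ 2| *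
      (‖w - μ‖ ^ 2 / σ ^ 2 + 1) := h1
    _ ≤ (Cn d σ * M₀ * Qf d σ w μ / σ ^ 2) *
        ((1 / σ ^ 2 + 1 / σ ^ 2 * σ ^ 2) * (1 + ‖w - μ‖) ^ 2) := by
        have h2 := scalar_abs_le hσ k hbd μ w
        have hpos : (0:ℝ) ≤ ‖w - μ‖ ^ 2 / σ ^ 2 + 1 := by positivity
        exact mul_le_mul h2 h3 hpos (by positivity)
    _ = (Cn d σ * M₀ * (1 / σ ^ 2 + 1 / σ ^ 2 * σ ^ 2) * (1 / σ ^ 2)) *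
        (Qf d σ w μ * (1 + ‖w - μ‖) ^ 2) := by ring
    _ ≤ (Cn d σ * M₀ * (1 / σ ^ 2 + 1 / σ ^ 2 * σ ^ 2) * (1 / σ ^ 2)) *
        (rexp (4 * σ ^ 2 + 1 / (4 * σ ^ 2)) * rexp (-‖w - μ₀‖ ^ 2 / (8 * σ ^ 2))) := by
        gcongr
    _ = Bnd d σ M₀ μ₀ w := by
        unfold Bnd
        rw [mul_assoc (Cn d σ * M₀), hfac]
        ring

/-! ### Measurability -/

lemma meas_F (hk : Measurable k) (μ : E) :
    AEStronglyMeasurable (fun w : E => Cn d σ * Qf d σ w μ * k w) volume :=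
  ((continuous_const.mul (continuous_Qf (d := d) (σ := σ) μ)).aestronglyMeasurable).mul
    hk.aestronglyMeasurable

lemma cont_inner1 (μ : E) : Continuous fun w : E => innerSL ℝ (w - μ) := by
  have : (fun w : E => innerSL ℝ (w - μ)) = fun w : E => innerR d (w - μ) := rfl
  rw [this]
  exact (innerR d).continuous.comp (continuous_id.sub continuous_const)

lemma meas_D1 (hk : Measurable k) (μ : E) :
    AEStronglyMeasurable (fun w : E => D1 d σ k μ w) volume := by
  unfold D1
  simp only [div_eq_mul_inv]
  refine AEStronglyMeasurable.smul (𝕜 := ℝ) ?_ (cont_inner1 (d := d) μ).aestronglyMeasurable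
  exact ((aestronglyMeasurable_const.mul hk.aestronglyMeasurable).mul
    (continuous_Qf (d := d) (σ := σ) μ).aestronglyMeasurable).mul aestronglyMeasurable_const

lemma meas_D2 (hk : Measurable k) (μ : E) :
    AEStronglyMeasurable (fun w : E => D2 d σ k μ w) volume := by
  unfold D2
  simp only [div_eq_mul_inv]
  refine AEStronglyMeasurable.smul (𝕜 := ℝ) ?_ ?_
  · exact ((aestronglyMeasurable_const.mul hk.aestronglyMeasurable).mul
      (continuous_Qf (d := d) (σ := σ) μ).aestronglyMeasurable).mul aestronglyMeasurable_const
  · have hcont2 : Continuous fun w : E =>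
        (innerSL ℝ (w - μ)).smulRight (innerSL ℝ (w - μ)) :=
      isBoundedBilinearMap_smulRight.continuous.comp
        ((cont_inner1 (d := d) μ).prodMk (cont_inner1 (d := d) μ))
    exact (((continuous_const (y := (_ : ℝ))).smul hcont2).sub continuous_const).aestronglyMeasurable

/-! ### Integrability -/

noncomputable instance instCENormCLM2 : ContinuousENorm (E →L[ℝ] E →L[ℝ] ℝ) :=
  @SeminormedAddGroup.toContinuousENorm _ ContinuousLinearMap.toSeminormedAddCommGroup.toSeminormedAddGroup

variable {k : EuclideanSpace ℝ (Fin d) → ℝ} {M₀ : ℝ}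

lemma int_F (hσ : 0 < σ) (hk : Measurable k) (hbd : ∀ w, |k w| ≤ M₀) (μ : E) :
    Integrable (fun w : E => Cn d σ * Qf d σ w μ * k w) := by
  refine ((i0 hσ μ).const_mul M₀).mono' (meas_F hk μ) ?_
  filter_upwards with w
  have hCn := Cn_pos (d := d) hσ
  have hQ := Qf_pos (d := d) (σ := σ) w μ
  rw [Real.norm_eq_abs, abs_mul, abs_mul, abs_of_pos hCn, abs_of_pos hQ]
  calc Cn d σ * Qf d σ w μ * |k w| ≤ Cn d σ * Qf d σ w μ * M₀ := by
        have := hbd w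
        have : (0:ℝ) ≤ Cn d σ * Qf d σ w μ := by positivity
        nlinarith [hbd w]
    _ = M₀ * (Cn d σ * Qf d σ w μ) := by ring

lemma int_D1 (hσ : 0 < σ) (hk : Measurable k) (hbd : ∀ w, |k w| ≤ M₀) (μ₀ : E) :
    Integrable (fun w : E => D1 d σ k μ₀ w) := by
  refine (integrable_Bnd hσ M₀ μ₀).mono' (meas_D1 hk μ₀) ?_
  filter_upwards with w
  exact norm_D1_le hσ k hbd μ₀ w μ₀ (Metric.mem_ball_self one_pos)

lemma int_D2 (hσ : 0 < σ) (hk : Measurable k) (hbd : ∀ w, |k w| ≤ M₀) (μ₀ : E) :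
    Integrable (fun w : E => D2 d σ k μ₀ w) := by
  refine (integrable_Bnd hσ M₀ μ₀).mono' (f := fun w : E => D2 d σ k μ₀ w) (meas_D2 hk μ₀) ?_
  filter_upwards with w
  exact norm_D2_le hσ k hbd μ₀ w μ₀ (Metric.mem_ball_self one_pos)

lemma int_D2_apply (hσ : 0 < σ) (hk : Measurable k) (hbd : ∀ w, |k w| ≤ M₀) (μ₀ s : E) :
    Integrable (fun w : E => D2 d σ k μ₀ w s) := by
  refine (((integrable_Bnd hσ M₀ μ₀).mul_const ‖s‖).mono' ?_ ?_)
  · exact (ContinuousLinearMap.apply ℝ (EuclideanSpace ℝ (Fin d) →L[ℝ] ℝ)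
      s).continuous.comp_aestronglyMeasurable (meas_D2 hk μ₀)
  · filter_upwards with w
    calc ‖D2 d σ k μ₀ w s‖ ≤ ‖D2 d σ k μ₀ w‖ * ‖s‖ :=
          ContinuousLinearMap.le_opNorm _ s
      _ ≤ Bnd d σ M₀ μ₀ w * ‖s‖ := by
          have := norm_D2_le hσ k hbd μ₀ w μ₀ (Metric.mem_ball_self one_pos)
          gcongr

lemma int_D2_apply2 (hσ : 0 < σ) (hk : Measurable k) (hbd : ∀ w, |k w| ≤ M₀) (μ₀ s : E) :
    Integrable (fun w : E => D2 d σ k μ₀ w s s) := by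
  refine ((((integrable_Bnd hσ M₀ μ₀).mul_const ‖s‖).mul_const ‖s‖).mono' ?_ ?_)
  · exact (ContinuousLinearMap.apply ℝ ℝ s).continuous.comp_aestronglyMeasurable
      ((ContinuousLinearMap.apply ℝ (EuclideanSpace ℝ (Fin d) →L[ℝ] ℝ)
        s).continuous.comp_aestronglyMeasurable (meas_D2 hk μ₀))
  · filter_upwards with w
    have hb := norm_D2_le hσ k hbd μ₀ w μ₀ (Metric.mem_ball_self one_pos)
    calc ‖D2 d σ k μ₀ w s s‖ ≤ ‖D2 d σ k μ₀ w s‖ * ‖s‖ :=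
          ContinuousLinearMap.le_opNorm _ s
      _ ≤ (‖D2 d σ k μ₀ w‖ * ‖s‖) * ‖s‖ := by
          gcongr
          exact ContinuousLinearMap.le_opNorm _ s
      _ ≤ Bnd d σ M₀ μ₀ w * ‖s‖ * ‖s‖ := by gcongr

/-! ### Differentiation under the integral -/

lemma hasFDerivAt_int1 (hσ : 0 < σ) (hk : Measurable k) (hbd : ∀ w, |k w| ≤ M₀) (μ₀ : E) :
    HasFDerivAt (fun μ : E => ∫ w : E, Cn d σ * Qf d σ w μ * k w)
      (∫ w : E, D1 d σ k μ₀ w) μ₀ := by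
  apply hasFDerivAt_integral_of_dominated_of_fderiv_le (F' := fun μ w => D1 d σ k μ w)
    (bound := fun w => Bnd d σ M₀ μ₀ w) (Metric.ball_mem_nhds μ₀ one_pos)
  · exact Filter.Eventually.of_forall fun μ => meas_F hk μ
  · exact int_F hσ hk hbd μ₀
  · exact meas_D1 hk μ₀
  · exact Filter.Eventually.of_forall fun w => norm_D1_le hσ k hbd μ₀ w
  · exact integrable_Bnd hσ M₀ μ₀
  · exact Filter.Eventually.of_forall fun w μ _ => hasFDerivAt_F hσ k w μ

lemma hasFDerivAt_int2 (hσ : 0 < σ) (hk : Measurable k) (hbd : ∀ w, |k w| ≤ M₀) (μ₀ : E) :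
    HasFDerivAt (fun μ : E => ∫ w : E, D1 d σ k μ w)
      (∫ w : E, D2 d σ k μ₀ w) μ₀ := by
  apply hasFDerivAt_integral_of_dominated_of_fderiv_le (F' := fun μ w => D2 d σ k μ w)
    (bound := fun w => Bnd d σ M₀ μ₀ w) (Metric.ball_mem_nhds μ₀ one_pos)
  · exact Filter.Eventually.of_forall fun μ => meas_D1 hk μ
  · exact int_D1 hσ hk hbd μ₀
  · exact meas_D2 hk μ₀
  · exact Filter.Eventually.of_forall fun w => norm_D2_le hσ k hbd μ₀ w
  · exact integrable_Bnd hσ M₀ μ₀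
  · exact Filter.Eventually.of_forall fun w μ _ => hasFDerivAt_D1 hσ k w μ

/-! ### The zero identity from `k = 1` -/

lemma hbd_one : ∀ w : E, |(fun _ : E => (1:ℝ)) w| ≤ 1 := fun _ => by norm_num

lemma integral_D1_one (hσ : 0 < σ) (μ : E) :
    ∫ w : E, D1 d σ (fun _ => (1:ℝ)) μ w = 0 := by
  have h := hasFDerivAt_int1 (d := d) hσ measurable_const hbd_one μ
  have hconst : (fun μ : E => ∫ w : E, Cn d σ * Qf d σ w μ * (1:ℝ)) = fun _ => (1:ℝ) := by
    funext ν
    simp only [mul_one]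
    exact normQ hσ ν
  rw [hconst] at h
  exact h.unique (hasFDerivAt_const 1 μ)

lemma integral_D2_one (hσ : 0 < σ) (μ₀ : E) :
    ∫ w : E, D2 d σ (fun _ => (1:ℝ)) μ₀ w = 0 := by
  have h := hasFDerivAt_int2 (d := d) hσ measurable_const hbd_one μ₀
  have hzero : (fun μ : E => ∫ w : E, D1 d σ (fun _ => (1:ℝ)) μ w)
      = fun _ => (0 : EuclideanSpace ℝ (Fin d) →L[ℝ] ℝ) := by
    funext μ; exact integral_D1_one hσ μ
  rw [hzero] at h
  exact h.unique (hasFDerivAt_const 0 μ₀)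

lemma moment_zero (hσ : 0 < σ) (μ s : E) :
    ∫ w : E, D2 d σ (fun _ => (1:ℝ)) μ w s s = 0 := by
  have e1 : (∫ w : E, D2 d σ (fun _ => (1:ℝ)) μ w) s
      = ∫ w : E, D2 d σ (fun _ => (1:ℝ)) μ w s :=
    ContinuousLinearMap.integral_apply (int_D2 hσ measurable_const hbd_one μ) s
  have e2 : (∫ w : E, D2 d σ (fun _ => (1:ℝ)) μ w s) s
      = ∫ w : E, D2 d σ (fun _ => (1:ℝ)) μ w s s :=
    ContinuousLinearMap.integral_apply (int_D2_apply hσ measurable_const hbd_one μ s) s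
  rw [← e2, ← e1, integral_D2_one hσ μ]
  simp

/-! ### Second moment -/

lemma i2 (hσ : 0 < σ) (μ s : E) :
    Integrable (fun w : E => Cn d σ * Qf d σ w μ * (inner ℝ (w - μ) s : ℝ) ^ 2) := by
  have hb : (0:ℝ) < 1 / (8 * σ ^ 2) := by positivity
  refine ((integrable_gauss_shift (d := d) hb μ).const_mul
    (Cn d σ * ‖s‖ ^ 2 * rexp (4 * σ ^ 2 + 1 / (4 * σ ^ 2)))).mono' ?_ ?_
  · have hin : Continuous fun w : E => (inner ℝ (w - μ) s : ℝ) :=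
      (continuous_id.sub continuous_const).inner continuous_const
    exact ((continuous_const.mul (continuous_Qf (d := d) (σ := σ) μ)).mul
      (hin.pow 2)).aestronglyMeasurable
  · filter_upwards with w
    have hCn := Cn_pos (d := d) hσ
    have hQ := Qf_pos (d := d) (σ := σ) w μ
    have hu0 : (0:ℝ) ≤ ‖w - μ‖ := norm_nonneg _
    have hip : (inner ℝ (w - μ) s : ℝ) ^ 2 ≤ ‖w - μ‖ ^ 2 * ‖s‖ ^ 2 := by
      have h := abs_real_inner_le_norm (w - μ) s
      have h2 : (inner ℝ (w - μ) s : ℝ) ^ 2 = |(inner ℝ (w - μ) s : ℝ)| ^ 2 := (sq_abs _).symm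
      rw [h2, ← mul_pow]
      exact pow_le_pow_left₀ (abs_nonneg _) h 2
    have hpoly : Qf d σ w μ * ‖w - μ‖ ^ 2 ≤ Qf d σ w μ * (1 + ‖w - μ‖) ^ 2 := by
      gcongr
      nlinarith
    have hdom := dom_ineq (x := ‖w - μ‖) hσ hu0 hu0 (by linarith)
    rw [Real.norm_eq_abs, abs_of_nonneg (by positivity)]
    calc Cn d σ * Qf d σ w μ * (inner ℝ (w - μ) s : ℝ) ^ 2
        ≤ Cn d σ * Qf d σ w μ * (‖w - μ‖ ^ 2 * ‖s‖ ^ 2) := by gcongr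
      _ = (Cn d σ * ‖s‖ ^ 2) * (Qf d σ w μ * ‖w - μ‖ ^ 2) := by ring
      _ ≤ (Cn d σ * ‖s‖ ^ 2) * (Qf d σ w μ * (1 + ‖w - μ‖) ^ 2) := by gcongr
      _ ≤ (Cn d σ * ‖s‖ ^ 2) * (rexp (4 * σ ^ 2 + 1 / (4 * σ ^ 2)) *
          rexp (-‖w - μ‖ ^ 2 / (8 * σ ^ 2))) := by
          have hq : Qf d σ w μ = rexp (-‖w - μ‖ ^ 2 / (2 * σ ^ 2)) := rfl
          rw [hq]
          gcongr
      _ = Cn d σ * ‖s‖ ^ 2 * rexp (4 * σ ^ 2 + 1 / (4 * σ ^ 2)) *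
          rexp (-(1 / (8 * σ ^ 2)) * ‖w - μ‖ ^ 2) := by
          rw [show (-(1 / (8 * σ ^ 2)) * ‖w - μ‖ ^ 2) = -‖w - μ‖ ^ 2 / (8 * σ ^ 2) by ring]
          ring

lemma psi_eq (hσ : 0 < σ) (μ s : E) (w : E) :
    D2 d σ (fun _ => (1:ℝ)) μ w s s
      = (1 / σ ^ 4) * (Cn d σ * Qf d σ w μ * (inner ℝ (w - μ) s : ℝ) ^ 2)
        - (‖s‖ ^ 2 / σ ^ 2) * (Cn d σ * Qf d σ w μ) := by
  rw [D2_apply, real_inner_self_eq_norm_sq]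
  rw [show (inner ℝ (w - μ) s : ℝ) * (inner ℝ (w - μ) s : ℝ) = (inner ℝ (w - μ) s : ℝ) ^ 2 from
    (sq _).symm]
  ring

lemma moment_two (hσ : 0 < σ) (μ s : E) :
    ∫ w : E, Cn d σ * Qf d σ w μ * (inner ℝ (w - μ) s : ℝ) ^ 2 = σ ^ 2 * ‖s‖ ^ 2 := by
  have hZ := moment_zero hσ μ s
  have heq : (fun w : E => D2 d σ (fun _ => (1:ℝ)) μ w s s)
      = fun w : E => (1 / σ ^ 4) * (Cn d σ * Qf d σ w μ * (inner ℝ (w - μ) s : ℝ) ^ 2)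
        - (‖s‖ ^ 2 / σ ^ 2) * (Cn d σ * Qf d σ w μ) := by
    funext w; exact psi_eq hσ μ s w
  rw [heq] at hZ
  rw [integral_sub ((i2 hσ μ s).const_mul _) ((i0 hσ μ).const_mul _)] at hZ
  rw [integral_const_mul, integral_const_mul, normQ hσ μ] at hZ
  have hσ4 : (σ:ℝ) ^ 4 ≠ 0 := by positivity
  have hσ2 : (σ:ℝ) ^ 2 ≠ 0 := by positivity
  set X := ∫ w : E, Cn d σ * Qf d σ w μ * (inner ℝ (w - μ) s : ℝ) ^ 2 with hX
  have h1 : 1 / σ ^ 4 * X = ‖s‖ ^ 2 / σ ^ 2 := by linarith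
  have h2 : X = σ ^ 4 * (1 / σ ^ 4 * X) := by field_simp
  rw [h2, h1]
  field_simp

/-! ### Main bound -/

lemma main_bound (hσ : 0 < σ) {M : ℝ} (hM : 0 < M) (hk : Measurable k)
    (hk0 : ∀ w, 0 ≤ k w) (hkM : ∀ w, k w ≤ M) (μ s : E) :
    |∫ w : E, D2 d σ k μ w s s| ≤ M / σ ^ 2 * ‖s‖ ^ 2 := by
  have hbd : ∀ w, |k w| ≤ M := fun w => abs_le.mpr ⟨by linarith [hk0 w], hkM w⟩
  have hφ := int_D2_apply2 hσ hk hbd μ s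
  have hψ := int_D2_apply2 (M₀ := 1) hσ measurable_const hbd_one μ s
  have hZ := moment_zero hσ μ s
  have hφψ : ∀ w, D2 d σ k μ w s s = k w * D2 d σ (fun _ => (1:ℝ)) μ w s s := by
    intro w; rw [D2_apply, D2_apply]; ring
  have hρ : Integrable (fun w : E => (k w - M / 2) * D2 d σ (fun _ => (1:ℝ)) μ w s s) := by
    have he : (fun w : E => (k w - M / 2) * D2 d σ (fun _ => (1:ℝ)) μ w s s)
        = fun w => D2 d σ k μ w s s - (M / 2) * D2 d σ (fun _ => (1:ℝ)) μ w s s := by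
      funext w; rw [hφψ w]; ring
    rw [he]; exact hφ.sub (hψ.const_mul _)
  have hI : ∫ w : E, D2 d σ k μ w s s
      = ∫ w : E, (k w - M / 2) * D2 d σ (fun _ => (1:ℝ)) μ w s s := by
    have he : (fun w : E => D2 d σ k μ w s s)
        = fun w => (k w - M / 2) * D2 d σ (fun _ => (1:ℝ)) μ w s s
          + (M / 2) * D2 d σ (fun _ => (1:ℝ)) μ w s s := by
      funext w; rw [hφψ w]; ring
    rw [he, integral_add hρ (hψ.const_mul _), integral_const_mul, hZ, mul_zero, add_zero]
  set γ : E → ℝ := fun w => (1 / σ ^ 4) * (Cn d σ * Qf d σ w μ * (inner ℝ (w - μ) s : ℝ) ^ 2)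
      + (‖s‖ ^ 2 / σ ^ 2) * (Cn d σ * Qf d σ w μ) with hγ
  have hγint : Integrable γ := ((i2 hσ μ s).const_mul _).add ((i0 hσ μ).const_mul _)
  have hpt : ∀ w, |(k w - M / 2) * D2 d σ (fun _ => (1:ℝ)) μ w s s| ≤ (M / 2) * γ w := by
    intro w
    rw [abs_mul]
    have hCn := Cn_pos (d := d) hσ
    have hQ := Qf_pos (d := d) (σ := σ) w μ
    have h1 : |k w - M / 2| ≤ M / 2 :=
      abs_le.mpr ⟨by linarith [hk0 w], by linarith [hkM w]⟩
    have h2 : |D2 d σ (fun _ => (1:ℝ)) μ w s s| ≤ γ w := by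
      rw [psi_eq hσ μ s w]
      have ha : (0:ℝ) ≤ (1 / σ ^ 4) * (Cn d σ * Qf d σ w μ * (inner ℝ (w - μ) s : ℝ) ^ 2) := by
        positivity
      have hb' : (0:ℝ) ≤ (‖s‖ ^ 2 / σ ^ 2) * (Cn d σ * Qf d σ w μ) := by positivity
      refine (abs_sub _ _).trans ?_
      rw [abs_of_nonneg ha, abs_of_nonneg hb']
    exact mul_le_mul h1 h2 (abs_nonneg _) (by linarith)
  have hγval : ∫ w : E, γ w = 2 * ‖s‖ ^ 2 / σ ^ 2 := by
    rw [hγ]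
    rw [integral_add ((i2 hσ μ s).const_mul _) ((i0 hσ μ).const_mul _),
      integral_const_mul, integral_const_mul, moment_two hσ μ s, normQ hσ μ]
    have hσ0 : (σ:ℝ) ≠ 0 := ne_of_gt hσ
    field_simp
    ring
  calc |∫ w : E, D2 d σ k μ w s s|
      = |∫ w : E, (k w - M / 2) * D2 d σ (fun _ => (1:ℝ)) μ w s s| := by rw [hI]
    _ ≤ ∫ w : E, |(k w - M / 2) * D2 d σ (fun _ => (1:ℝ)) μ w s s| := by
        exact norm_integral_le_integral_norm
          (fun w : E => (k w - M / 2) * D2 d σ (fun _ => (1:ℝ)) μ w s s)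
    _ ≤ ∫ w : E, (M / 2) * γ w := by
        refine integral_mono hρ.abs (hγint.const_mul _) ?_
        intro w; exact hpt w
    _ = (M / 2) * ∫ w : E, γ w := integral_const_mul _ _
    _ = (M / 2) * (2 * ‖s‖ ^ 2 / σ ^ 2) := by rw [hγval]
    _ = M / σ ^ 2 * ‖s‖ ^ 2 := by ring

end GSAux

open GSAux in
theorem stmt_6 (d : ℕ) (hd : 1 ≤ d) (σ M : ℝ) (hσ : 0 < σ) (hM : 0 < M)
    (k : EuclideanSpace ℝ (Fin d) → ℝ) (hmeas : Measurable k)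
    (hk0 : ∀ w, 0 ≤ k w) (hkM : ∀ w, k w ≤ M)
    (g : EuclideanSpace ℝ (Fin d) → ℝ) (hg : g = gaussSmooth d σ k)
    (μ s : EuclideanSpace ℝ (Fin d)) :
    |iteratedFDeriv ℝ 2 g μ ![s, s]| ≤ (M / σ ^ 2) * ‖s‖ ^ 2 := by
  subst hg
  have hbd : ∀ w, |k w| ≤ M := fun w => abs_le.mpr ⟨by linarith [hk0 w], hkM w⟩
  have hG : gaussSmooth d σ k
      = fun μ => ∫ w, Cn d σ * Qf d σ w μ * k w := rfl
  rw [iteratedFDeriv_two_apply]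
  rw [show (![s, s] : Fin 2 → EuclideanSpace ℝ (Fin d)) 0 = s from rfl,
    show (![s, s] : Fin 2 → EuclideanSpace ℝ (Fin d)) 1 = s from rfl]
  rw [hG]
  have hf1 : fderiv ℝ (fun μ => ∫ w, Cn d σ * Qf d σ w μ * k w)
      = fun μ => ∫ w, D1 d σ k μ w :=
    funext fun μ => (hasFDerivAt_int1 hσ hmeas hbd μ).fderiv
  rw [hf1, (hasFDerivAt_int2 hσ hmeas hbd μ).fderiv]
  rw [ContinuousLinearMap.integral_apply (int_D2 hσ hmeas hbd μ) s,
    ContinuousLinearMap.integral_apply (int_D2_apply hσ hmeas hbd μ s) s]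
  exact main_bound hσ hM hmeas hk0 hkM μ s
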